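/- If the clustering-difference graph CDG(C, C') decomposes into vertex-disjoint directed cycles, then the transformation distance satisfies d(C, C') ≤ 2, i.e., C can be transformed into C' by at most two cyclical moves. -/

import Mathlib

variable {X : Type*} [Fintype X] [DecidableEq X] {k : ℕ}

/-- The clustering-difference graph `CDG(c, c'')` (one edge `c x → c'' x` for each
item `x` with `c x ≠ c'' x`) is a single directed cycle: there are `m + 1` distinct
cluster indices `v 0, ..., v m` and the items moved are exactly one per edge
`v i → v (i+1)` (indices mod `m + 1`). -/
def IsCyclicalMove (c c'' : X → Fin k) : Prop :=
  ∃ (m : ℕ) (v : Fin (m + 1) ↪ Fin k)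
    (e : {x : X // c x ≠ c'' x} ≃ Fin (m + 1)),
    ∀ x : {x : X // c x ≠ c'' x}, c x.1 = v (e x) ∧ c'' x.1 = v (e x + 1)

/-- The clustering-difference graph `CDG(c, c'')` is a single directed path: there
are `m + 2` distinct cluster indices `v 0, ..., v (m+1)` and the items moved are
exactly one per edge `v i → v (i+1)`, `0 ≤ i ≤ m`. -/
def IsSequentialMove (c c'' : X → Fin k) : Prop :=
  ∃ (m : ℕ) (v : Fin (m + 2) ↪ Fin k)
    (e : {x : X // c x ≠ c'' x} ≃ Fin (m + 1)),
    ∀ x : {x : X // c x ≠ c'' x}, c x.1 = v (e x).castSucc ∧ c'' x.1 = v (e x).succ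

/-- An elementary move: a cyclical or a sequential move. -/
def IsMove (c c'' : X → Fin k) : Prop :=
  IsCyclicalMove c c'' ∨ IsSequentialMove c c''

/-- The transformation distance: the minimum number of elementary moves needed to
transform `c` into `c'`. -/
noncomputable def transDist (c c' : X → Fin k) : ℕ :=
  sInf {n | ∃ f : ℕ → X → Fin k, f 0 = c ∧ f n = c' ∧ ∀ i < n, IsMove (f i) (f (i + 1))}

/-- The size of cluster `i` in the clustering `c`. -/
def clusterSize (c : X → Fin k) (i : Fin k) : ℕ :=
  (Finset.univ.filter fun x => c x = i).card

/-- The outdegree of vertex `i` in `CDG(c, c')`. -/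
def cdgOutdeg (c c' : X → Fin k) (i : Fin k) : ℕ :=
  (Finset.univ.filter fun x => c x = i ∧ c' x ≠ i).card

/-- The indegree of vertex `i` in `CDG(c, c')`. -/
def cdgIndeg (c c' : X → Fin k) (i : Fin k) : ℕ :=
  (Finset.univ.filter fun x => c' x = i ∧ c x ≠ i).card

/-- The shared degree of vertex `i` in `CDG(c, c')`. -/
def sharedDeg (c c' : X → Fin k) (i : Fin k) : ℕ :=
  min (cdgIndeg c c' i) (cdgOutdeg c c' i)

/-- The edges of `CDG(c, c')` labeled by the items in `B` form a single directed
cycle through `m + 1` distinct cluster indices. -/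
def IsCycleOn (c c' : X → Fin k) (B : Finset X) : Prop :=
  ∃ (m : ℕ) (v : Fin (m + 1) ↪ Fin k) (g : Fin (m + 1) → X),
    Function.Injective g ∧ Finset.univ.image g = B ∧
    ∀ i, c (g i) = v i ∧ c' (g i) = v (i + 1)

/-- The edges of `CDG(c, c')` labeled by the items in `B` form a single directed
path through `m + 2` distinct cluster indices. -/
def IsPathOn (c c' : X → Fin k) (B : Finset X) : Prop :=
  ∃ (m : ℕ) (v : Fin (m + 2) ↪ Fin k) (g : Fin (m + 1) → X),
    Function.Injective g ∧ Finset.univ.image g = B ∧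
    ∀ i : Fin (m + 1), c (g i) = v i.castSucc ∧ c' (g i) = v i.succ


section CDGAux

variable {r : ℕ} (m : Fin r → ℕ)

/-- Partial sum of block sizes before block `j`. -/
def cdgSnat (j : Fin r) : ℕ := ∑ t ∈ Finset.univ.filter (fun t => t < j), (m t + 1)

lemma cdgSnat_add (j : Fin r) :
    cdgSnat m j + (m j + 1) = ∑ t ∈ Finset.univ.filter (fun t => t ≤ j), (m t + 1) := by
  have h : Finset.univ.filter (fun t => t ≤ j)
      = insert j (Finset.univ.filter (fun t => t < j)) := by
    ext t
    simp only [Finset.mem_filter, Finset.mem_univ, true_and, Finset.mem_insert]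
    constructor
    · intro ht; rcases eq_or_lt_of_le ht with h1 | h1
      · exact Or.inl h1
      · exact Or.inr h1
    · rintro (rfl | ht); · exact le_refl _
      · exact le_of_lt ht
  rw [h, Finset.sum_insert (by simp)]
  unfold cdgSnat
  omega

lemma cdgSnat_le_total (j : Fin r) :
    cdgSnat m j + (m j + 1) ≤ ∑ t, (m t + 1) := by
  rw [cdgSnat_add]
  exact Finset.sum_le_sum_of_subset (Finset.filter_subset _ _)

lemma cdgSnat_le_of_lt {a b : Fin r} (h : a < b) :
    cdgSnat m a + (m a + 1) ≤ cdgSnat m b := by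
  rw [cdgSnat_add]
  apply Finset.sum_le_sum_of_subset
  intro t ht
  simp only [Finset.mem_filter, Finset.mem_univ, true_and] at ht ⊢
  exact lt_of_le_of_lt ht h

/-- The lexicographic packing of a sigma of `Fin`s into one `Fin`. -/
def cdgPack (p : Σ j : Fin r, Fin (m j + 1)) : Fin (∑ t, (m t + 1)) :=
  ⟨cdgSnat m p.1 + p.2.1,
    lt_of_lt_of_le (by have := p.2.2; omega) (cdgSnat_le_total m p.1)⟩

lemma cdgPack_inj : Function.Injective (cdgPack m) := by
  rintro ⟨j, i⟩ ⟨j', i'⟩ h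
  have hv : cdgSnat m j + i.1 = cdgSnat m j' + i'.1 := congrArg Fin.val h
  have hj : j = j' := by
    by_contra hne
    rcases lt_or_gt_of_ne hne with hlt | hlt
    · have h1 := cdgSnat_le_of_lt m hlt
      have h2 := i.2
      omega
    · have h1 := cdgSnat_le_of_lt m hlt
      have h2 := i'.2
      omega
  subst hj
  have : i = i' := Fin.ext (by omega)
  rw [this]

/-- `cdgPack` as an equivalence. -/
noncomputable def cdgPackEquiv : (Σ j : Fin r, Fin (m j + 1)) ≃ Fin (∑ t, (m t + 1)) :=
  Equiv.ofBijective (cdgPack m)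
    ((Fintype.bijective_iff_injective_and_card _).2 ⟨cdgPack_inj m, by simp⟩)

@[simp] lemma cdgPackEquiv_apply (p) : cdgPackEquiv m p = cdgPack m p := rfl

lemma fin_val_add_one {n : ℕ} [NeZero n] (a : Fin n) :
    (a + 1).1 = (a.1 + 1 % n) % n := by
  rw [Fin.add_def, Fin.val_one']

private lemma nat_mod_helper1 (x n : ℕ) (h : x + 1 < n) : (x + 1 % n) % n = x + 1 := by
  rw [Nat.add_mod_mod, Nat.mod_eq_of_lt h]

private lemma nat_mod_helper2 (x n : ℕ) (h : x + 1 = n) : (x + 1 % n) % n = 0 := by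
  rw [Nat.add_mod_mod, h, Nat.mod_self]

lemma cdgPack_succ_ne_last [NeZero (∑ t : Fin r, (m t + 1))]
    (j : Fin r) (i : Fin (m j + 1)) (h : i ≠ Fin.last (m j)) :
    cdgPack m ⟨j, i⟩ + 1 = cdgPack m ⟨j, i + 1⟩ := by
  have hi : i.1 + 1 < m j + 1 := by
    have h1 := i.2
    have h2 : i.1 ≠ m j := fun hh => h (Fin.ext hh)
    omega
  have hN : cdgSnat m j + i.1 + 1 < ∑ t, (m t + 1) :=
    lt_of_lt_of_le (by omega) (cdgSnat_le_total m j)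
  apply Fin.ext
  rw [fin_val_add_one]
  show (cdgSnat m j + i.1 + 1 % _) % _ = cdgSnat m j + (i + 1).1
  have h2 : (i + 1).1 = i.1 + 1 := by
    rw [fin_val_add_one]
    exact nat_mod_helper1 _ _ hi
  rw [h2, nat_mod_helper1 _ _ hN]
  omega

lemma cdgPack_succ_last [NeZero r] [NeZero (∑ t : Fin r, (m t + 1))] (j : Fin r) :
    cdgPack m ⟨j, Fin.last (m j)⟩ + 1 = cdgPack m ⟨j + 1, 0⟩ := by
  apply Fin.ext
  rw [fin_val_add_one]
  show (cdgSnat m j + (Fin.last (m j)).1 + 1 % _) % _ = cdgSnat m (j + 1) + (0 : Fin _).1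
  rw [Fin.val_last, Fin.val_zero, Nat.add_zero]
  rcases lt_or_eq_of_le (Nat.succ_le_of_lt j.2) with hc | hc
  · -- j.1 + 1 < r
    have hj1 : (j + 1).1 = j.1 + 1 := by
      rw [fin_val_add_one]
      exact nat_mod_helper1 _ _ hc
    have hfil : Finset.univ.filter (fun t => t < j + 1)
        = Finset.univ.filter (fun t => t ≤ j) := by
      ext t
      simp only [Finset.mem_filter, Finset.mem_univ, true_and, Fin.lt_def, Fin.le_def, hj1]
      omega
    have hsn : cdgSnat m (j + 1) = cdgSnat m j + (m j + 1) := by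
      rw [cdgSnat_add]
      unfold cdgSnat
      rw [hfil]
    have hlt : cdgSnat m (j + 1) < ∑ t, (m t + 1) := by
      have := cdgSnat_le_total m (j + 1)
      omega
    rw [hsn, nat_mod_helper1 (cdgSnat m j + m j) _ (by omega)]
    omega
  · -- j.1 + 1 = r : wrap around
    have hc' : j.1 + 1 = r := hc
    have hj1 : (j + 1).1 = 0 := by
      rw [fin_val_add_one, nat_mod_helper2 _ _ hc']
    have hsn : cdgSnat m (j + 1) = 0 := by
      unfold cdgSnat
      have : Finset.univ.filter (fun t => t < j + 1) = ∅ := by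
        ext t
        simp only [Finset.mem_filter, Finset.mem_univ, true_and, Fin.lt_def, hj1,
          Finset.notMem_empty, iff_false]
        omega
      rw [this, Finset.sum_empty]
    have htot : cdgSnat m j + (m j + 1) = ∑ t, (m t + 1) := by
      rw [cdgSnat_add]
      congr 1
      ext t
      simp only [Finset.mem_filter, Finset.mem_univ, true_and, iff_true, Fin.le_def]
      have := t.2
      omega
    rw [hsn, nat_mod_helper2 (cdgSnat m j + m j) _ (by omega)]

end CDGAux

lemma isCyclicalMove_of {X : Type*} [Fintype X] [DecidableEq X] {k : ℕ}
    {c c'' : X → Fin k} (N : ℕ) [NeZero N]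
    (v : Fin N ↪ Fin k) (e : {x : X // c x ≠ c'' x} ≃ Fin N)
    (h : ∀ x : {x : X // c x ≠ c'' x}, c x.1 = v (e x) ∧ c'' x.1 = v (e x + 1)) :
    IsCyclicalMove c c'' := by
  obtain ⟨M, rfl⟩ := Nat.exists_eq_succ_of_ne_zero (NeZero.ne N)
  exact ⟨M, v, e, h⟩

/-- If `CDG(c, c')` decomposes into pairwise vertex-disjoint directed cycles, then
`d(c, c') ≤ 2`; indeed `c` can be transformed into `c'` by at most two cyclical
moves. -/
theorem stmt_10 (c c' : X → Fin k) (CS : Finset (Finset X))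
    (hcyc : ∀ B ∈ CS, IsCycleOn c c' B)
    (hcover : CS.biUnion id = Finset.univ.filter fun x => c x ≠ c' x)
    (hdisj : ∀ B ∈ CS, ∀ B' ∈ CS, B ≠ B' → Disjoint (B.image c) (B'.image c)) :
    transDist c c' ≤ 2 ∧
    ∃ (n : ℕ) (f : ℕ → X → Fin k), n ≤ 2 ∧ f 0 = c ∧ f n = c' ∧
      ∀ i < n, IsCyclicalMove (f i) (f (i + 1)) := by
  classical
  rcases hs : CS.card with _ | s
  · -- no cycles at all: c = c'
    have hCS : CS = ∅ := Finset.card_eq_zero.mp hs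
    have hcc : c = c' := by
      funext x
      by_contra hx
      have hmem : x ∈ CS.biUnion id := by
        rw [hcover]
        exact Finset.mem_filter.mpr ⟨Finset.mem_univ x, hx⟩
      rw [hCS] at hmem
      simp at hmem
    constructor
    · have h0 : 0 ∈ {n | ∃ f : ℕ → X → Fin k,
          f 0 = c ∧ f n = c' ∧ ∀ i < n, IsMove (f i) (f (i + 1))} :=
        ⟨fun _ => c, rfl, by rw [hcc], by omega⟩
      exact le_trans (Nat.sInf_le h0) (by omega)
    · exact ⟨0, fun _ => c, by omega, rfl, by rw [hcc], by omega⟩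
  · -- at least one cycle
    have hr : CS.card = s + 1 := hs
    let ECS : {A // A ∈ CS} ≃ Fin (s + 1) := CS.equivFinOfCardEq hr
    let B : Fin (s + 1) → Finset X := fun j => (ECS.symm j : Finset X)
    have hBmem : ∀ j, B j ∈ CS := fun j => (ECS.symm j).2
    have hBinj : Function.Injective B := by
      intro a b hab
      exact ECS.symm.injective (Subtype.ext hab)
    choose m v g hg himg hvg using fun j => hcyc (B j) (hBmem j)
    have hgB : ∀ j i, g j i ∈ B j := by
      intro j i
      rw [← himg j]
      exact Finset.mem_image_of_mem _ (Finset.mem_univ i)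
    have hgD : ∀ j i, c (g j i) ≠ c' (g j i) := by
      intro j i
      have h1 : g j i ∈ CS.biUnion id := Finset.mem_biUnion.mpr ⟨B j, hBmem j, hgB j i⟩
      rw [hcover] at h1
      exact (Finset.mem_filter.mp h1).2
    have hvdisj : ∀ {j j' : Fin (s + 1)}, j ≠ j' →
        ∀ (i : Fin (m j + 1)) (i' : Fin (m j' + 1)), v j i ≠ v j' i' := by
      intro j j' hne i i' heq
      have hmem1 : v j i ∈ (B j).image c :=
        Finset.mem_image.mpr ⟨g j i, hgB j i, (hvg j i).1⟩
      have hmem2 : v j i ∈ (B j').image c := by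
        rw [heq]
        exact Finset.mem_image.mpr ⟨g j' i', hgB j' i', (hvg j' i').1⟩
      have hd := hdisj (B j) (hBmem j) (B j') (hBmem j') (fun h => hne (hBinj h))
      exact (Finset.disjoint_left.mp hd hmem1) hmem2
    have hGinj : ∀ {j j' : Fin (s + 1)} {i : Fin (m j + 1)} {i' : Fin (m j' + 1)},
        g j i = g j' i' → (⟨j, i⟩ : Σ t, Fin (m t + 1)) = ⟨j', i'⟩ := by
      intro j j' i i' heq
      rcases eq_or_ne j j' with rfl | hne
      · rw [hg j heq]
      · exfalso
        exact hvdisj hne i i' (by rw [← (hvg j i).1, heq, (hvg j' i').1])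
    have hlast0 : ∀ j, Fin.last (m j) ≠ (0 : Fin (m j + 1)) := by
      intro j h
      have hm0 : m j = 0 := by simpa using congrArg Fin.val h
      apply hgD j 0
      rw [(hvg j 0).1, (hvg j 0).2]
      congr 1
      apply Fin.ext
      simp [fin_val_add_one, hm0]
    -- the global bijection between moved items and sigma indices
    let GD : (Σ j : Fin (s + 1), Fin (m j + 1)) → {x : X // c x ≠ c' x} :=
      fun p => ⟨g p.1 p.2, hgD p.1 p.2⟩
    have hGDbij : Function.Bijective GD := by
      constructor
      · rintro ⟨j, i⟩ ⟨j', i'⟩ hpq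
        exact hGinj (congrArg Subtype.val hpq)
      · rintro ⟨x, hx⟩
        have hx' : x ∈ CS.biUnion id := by
          rw [hcover]
          exact Finset.mem_filter.mpr ⟨Finset.mem_univ x, hx⟩
        obtain ⟨A, hA, hxA⟩ := Finset.mem_biUnion.mp hx'
        have hAB : B (ECS ⟨A, hA⟩) = A := by
          show ((ECS.symm (ECS ⟨A, hA⟩) : {A // A ∈ CS}) : Finset X) = A
          rw [Equiv.symm_apply_apply]
        rw [← hAB, ← himg _] at hxA
        obtain ⟨i, _, hi⟩ := Finset.mem_image.mp hxA
        exact ⟨⟨ECS ⟨A, hA⟩, i⟩, Subtype.ext hi⟩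
    let ED : {x : X // c x ≠ c' x} ≃ (Σ j : Fin (s + 1), Fin (m j + 1)) :=
      (Equiv.ofBijective GD hGDbij).symm
    have hgx : ∀ (x : X) (h : c x ≠ c' x) (j : Fin (s + 1)) (i : Fin (m j + 1)),
        ED ⟨x, h⟩ = ⟨j, i⟩ → g j i = x := by
      intro x h j i hpe
      have h2 : GD (ED ⟨x, h⟩) = ⟨x, h⟩ :=
        (Equiv.ofBijective GD hGDbij).apply_symm_apply ⟨x, h⟩
      rw [hpe] at h2
      exact congrArg Subtype.val h2
    have hcx : ∀ (x : X) (h : c x ≠ c' x) (j : Fin (s + 1)) (i : Fin (m j + 1)),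
        ED ⟨x, h⟩ = ⟨j, i⟩ → c x = v j i := by
      intro x h j i hpe
      rw [← hgx x h j i hpe]
      exact (hvg j i).1
    have hc'x : ∀ (x : X) (h : c x ≠ c' x) (j : Fin (s + 1)) (i : Fin (m j + 1)),
        ED ⟨x, h⟩ = ⟨j, i⟩ → c' x = v j (i + 1) := by
      intro x h j i hpe
      rw [← hgx x h j i hpe]
      exact (hvg j i).2
    -- the intermediate clustering
    let nxt : (Σ j : Fin (s + 1), Fin (m j + 1)) → Fin k := fun p =>
      if p.2 = Fin.last (m p.1) then v (p.1 + 1) 0 else v p.1 (p.2 + 1)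
    let c'' : X → Fin k := fun x => if h : c x ≠ c' x then nxt (ED ⟨x, h⟩) else c x
    have hc''x : ∀ (x : X) (h : c x ≠ c' x) (j : Fin (s + 1)) (i : Fin (m j + 1)),
        ED ⟨x, h⟩ = ⟨j, i⟩ →
        c'' x = if i = Fin.last (m j) then v (j + 1) 0 else v j (i + 1) := by
      intro x h j i hpe
      have h1 : c'' x = nxt (ED ⟨x, h⟩) := dif_pos h
      rw [h1, hpe]
    have hc''_eq : ∀ x, c x = c' x → c'' x = c x := by
      intro x h
      exact dif_neg (by simpa using h)
    -- the wrap items, and ED on them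
    have hpew : ∀ j : Fin (s + 1),
        ED ⟨g j (Fin.last (m j)), hgD j (Fin.last (m j))⟩ = ⟨j, Fin.last (m j)⟩ := by
      intro j
      exact (Equiv.ofBijective GD hGDbij).symm_apply_apply ⟨j, Fin.last (m j)⟩
    -- the difference set of move 1 is the whole difference set
    have hD1 : ∀ x, (c x ≠ c'' x ↔ c x ≠ c' x) := by
      intro x
      constructor
      · intro h1 h2
        exact h1 (hc''_eq x h2).symm
      · intro h
        rcases hpe : ED ⟨x, h⟩ with ⟨j, i⟩
        rw [hc''x x h j i hpe, hcx x h j i hpe]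
        by_cases hl : i = Fin.last (m j)
        · rw [if_pos hl, hl]
          rcases eq_or_ne (j + 1) j with he | hne
          · rw [he]
            intro hcc
            exact hlast0 j ((v j).injective hcc)
          · exact hvdisj (Ne.symm hne) _ _
        · rw [if_neg hl]
          intro hcc
          exact h (by rw [hcx x h j i hpe, hcc, ← hc'x x h j i hpe])
    -- move 1 : one big cycle from c to c''
    haveI hNNZ : NeZero (∑ t : Fin (s + 1), (m t + 1)) :=
      ⟨(Finset.sum_pos (fun t _ => Nat.succ_pos _) Finset.univ_nonempty).ne'⟩
    have hVinj : Function.Injective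
        (fun p : Σ j : Fin (s + 1), Fin (m j + 1) => v p.1 p.2) := by
      rintro ⟨j, i⟩ ⟨j', i'⟩ hab
      simp only at hab
      rcases eq_or_ne j j' with rfl | hj
      · rw [(v j).injective hab]
      · exact absurd hab (hvdisj hj i i')
    let vbig : Fin (∑ t : Fin (s + 1), (m t + 1)) ↪ Fin k :=
      ⟨fun a => v ((cdgPackEquiv m).symm a).1 ((cdgPackEquiv m).symm a).2,
        fun a b hab => (cdgPackEquiv m).symm.injective (hVinj hab)⟩
    have hvbig : ∀ p, vbig (cdgPackEquiv m p) = v p.1 p.2 := by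
      intro p
      show v ((cdgPackEquiv m).symm (cdgPackEquiv m p)).1
          ((cdgPackEquiv m).symm (cdgPackEquiv m p)).2 = v p.1 p.2
      rw [Equiv.symm_apply_apply]
    let e1 : {x : X // c x ≠ c'' x} ≃ Fin (∑ t : Fin (s + 1), (m t + 1)) :=
      ((Equiv.subtypeEquivRight hD1).trans ED).trans (cdgPackEquiv m)
    have hmove1 : IsCyclicalMove c c'' := by
      apply isCyclicalMove_of (∑ t : Fin (s + 1), (m t + 1)) vbig e1
      rintro ⟨x, hx⟩
      have h : c x ≠ c' x := (hD1 x).mp hx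
      rcases hpe : ED ⟨x, h⟩ with ⟨j, i⟩
      have he1 : e1 ⟨x, hx⟩ = cdgPackEquiv m ⟨j, i⟩ := by
        show cdgPackEquiv m (ED ⟨x, h⟩) = cdgPackEquiv m ⟨j, i⟩
        rw [hpe]
      constructor
      · rw [he1, hvbig]
        exact hcx x h j i hpe
      · rw [he1, hc''x x h j i hpe]
        by_cases hl : i = Fin.last (m j)
        · rw [if_pos hl]
          have hsucc : cdgPackEquiv m ⟨j, i⟩ + 1 = cdgPackEquiv m ⟨j + 1, 0⟩ := by
            show cdgPack m ⟨j, i⟩ + 1 = cdgPack m ⟨j + 1, 0⟩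
            rw [hl]
            exact cdgPack_succ_last m j
          rw [hsucc, hvbig]
        · rw [if_neg hl]
          have hsucc : cdgPackEquiv m ⟨j, i⟩ + 1 = cdgPackEquiv m ⟨j, i + 1⟩ := by
            show cdgPack m ⟨j, i⟩ + 1 = cdgPack m ⟨j, i + 1⟩
            exact cdgPack_succ_ne_last m j i hl
          rw [hsucc, hvbig]
    -- now split according to whether there is one cycle or more
    rcases Nat.eq_zero_or_pos s with rfl | hspos
    · -- a single cycle : c'' = c' and one move suffices
      have hc''c' : c'' = c' := by
        funext x
        by_cases h : c x ≠ c' x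
        · rcases hpe : ED ⟨x, h⟩ with ⟨j, i⟩
          rw [hc''x x h j i hpe, hc'x x h j i hpe]
          by_cases hl : i = Fin.last (m j)
          · rw [if_pos hl]
            have hj : j + 1 = j := by
              have h1 := (j + 1).2
              have h2 := j.2
              exact Fin.ext (by omega)
            rw [hj, hl, Fin.last_add_one]
          · rw [if_neg hl]
        · push_neg at h
          rw [hc''_eq x (by simpa using h)]
          exact h
      have hmove : IsCyclicalMove c c' := hc''c' ▸ hmove1
      set f : ℕ → X → Fin k := fun i => if i = 0 then c else c' with hf
      have hf0 : f 0 = c := rfl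
      have hf1 : f 1 = c' := rfl
      have hmoves : ∀ i < 1, IsCyclicalMove (f i) (f (i + 1)) := by
        intro i hi
        interval_cases i
        exact hmove
      constructor
      · have h1 : 1 ∈ {n | ∃ f : ℕ → X → Fin k,
            f 0 = c ∧ f n = c' ∧ ∀ i < n, IsMove (f i) (f (i + 1))} :=
          ⟨f, hf0, hf1, fun i hi => Or.inl (hmoves i hi)⟩
        exact le_trans (Nat.sInf_le h1) (by omega)
      · exact ⟨1, f, by omega, hf0, hf1, hmoves⟩
    · -- at least two cycles: a second move fixes things up
      have hjne : ∀ j : Fin (s + 1), j + 1 ≠ j := by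
        intro j hj
        have hv1 := congrArg Fin.val hj
        rw [fin_val_add_one] at hv1
        have h1r : 1 % (s + 1) = 1 := Nat.mod_eq_of_lt (by omega)
        rw [h1r] at hv1
        have hjlt := j.2
        rcases Nat.lt_or_ge (j.1 + 1) (s + 1) with hh | hh
        · rw [Nat.mod_eq_of_lt hh] at hv1
          omega
        · have hje : j.1 + 1 = s + 1 := by omega
          rw [hje, Nat.mod_self] at hv1
          omega
      have hwrapD2 : ∀ j : Fin (s + 1),
          c'' (g j (Fin.last (m j))) ≠ c' (g j (Fin.last (m j))) := by
        intro j
        rw [hc''x _ (hgD j (Fin.last (m j))) j (Fin.last (m j)) (hpew j), if_pos rfl,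
          hc'x _ (hgD j (Fin.last (m j))) j (Fin.last (m j)) (hpew j), Fin.last_add_one]
        exact hvdisj (hjne j) 0 0
      let F : Fin (s + 1) → {x : X // c'' x ≠ c' x} :=
        fun t => ⟨g (-t - 1) (Fin.last (m (-t - 1))), hwrapD2 (-t - 1)⟩
      have hFbij : Function.Bijective F := by
        constructor
        · intro a b hab
          have h1 := hGinj (congrArg Subtype.val hab)
          have h2 : -a - 1 = -b - 1 := congrArg Sigma.fst h1
          have h3 : -a = -b := by
            have := congrArg (fun z => z + 1) h2
            simpa using this
          exact neg_inj.mp h3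
        · rintro ⟨x, hx2⟩
          have h : c x ≠ c' x := by
            intro hce
            exact hx2 (by rw [hc''_eq x hce, hce])
          rcases hpe : ED ⟨x, h⟩ with ⟨j, i⟩
          have hl : i = Fin.last (m j) := by
            by_contra hl
            apply hx2
            rw [hc''x x h j i hpe, if_neg hl]
            exact (hc'x x h j i hpe).symm
          refine ⟨-j - 1, Subtype.ext ?_⟩
          show g (-(-j - 1) - 1) (Fin.last (m (-(-j - 1) - 1))) = x
          have hjj : -(-j - 1) - 1 = j := by abel
          rw [hjj]
          rw [← hl]
          exact hgx x h j i hpe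
      let e2 : {x : X // c'' x ≠ c' x} ≃ Fin (s + 1) := (Equiv.ofBijective F hFbij).symm
      let v2 : Fin (s + 1) ↪ Fin k :=
        ⟨fun t => v (-t) 0, by
          intro a b hab
          have : -a = -b := by
            by_contra hne
            exact hvdisj hne 0 0 hab
          exact neg_inj.mp this⟩
      have hmove2 : IsCyclicalMove c'' c' := by
        apply isCyclicalMove_of (s + 1) v2 e2
        rintro y
        have hy : F (e2 y) = y := (Equiv.ofBijective F hFbij).apply_symm_apply y
        have hyv : y.1 = g (-(e2 y) - 1) (Fin.last (m (-(e2 y) - 1))) :=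
          (congrArg Subtype.val hy).symm
        constructor
        · show c'' y.1 = v (-(e2 y)) 0
          rw [hyv, hc''x _ (hgD _ _) _ _ (hpew (-(e2 y) - 1)), if_pos rfl]
          rw [show (-(e2 y) - 1 + 1 : Fin (s + 1)) = -(e2 y) by abel]
        · show c' y.1 = v (-(e2 y + 1)) 0
          rw [hyv, hc'x _ (hgD _ _) _ _ (hpew (-(e2 y) - 1)), Fin.last_add_one]
          rw [show (-(e2 y + 1) : Fin (s + 1)) = -(e2 y) - 1 by abel]
      set f : ℕ → X → Fin k := fun i => if i = 0 then c else if i = 1 then c'' else c' with hf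
      have hf0 : f 0 = c := rfl
      have hf1 : f 1 = c'' := rfl
      have hf2 : f 2 = c' := rfl
      have hmoves : ∀ i < 2, IsCyclicalMove (f i) (f (i + 1)) := by
        intro i hi
        interval_cases i
        · exact hmove1
        · exact hmove2
      constructor
      · have h2 : 2 ∈ {n | ∃ f : ℕ → X → Fin k,
            f 0 = c ∧ f n = c' ∧ ∀ i < n, IsMove (f i) (f (i + 1))} :=
          ⟨f, hf0, hf2, fun i hi => Or.inl (hmoves i hi)⟩
        exact Nat.sInf_le h2
      · exact ⟨2, f, by omega, hf0, hf2, hmoves⟩
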